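/- Let 𝒯 be a set of k rooted phylogenetic trees. If (ℬ₁,…,ℬ_d) is a decomposition of a sub-forest 𝒜 of 𝒯, then masp(𝒜) ≥ masp(ℬ₁) + … + masp(ℬ_d). -/

import Mathlib

/-- Rooted, unordered, leaf-labelled trees:
a tree is a single labelled leaf, or an (internal) root node with a list of subtrees
attached to it.  Being unordered, such trees are considered up to the
isomorphism `PTree.Iso` below.  The empty tree is represented by `none` in
`Option (PTree α)`. -/
inductive PTree (α : Type) : Type where
  | leaf : α → PTree α
  | node : List (PTree α) → PTree α

namespace PTree

variable {α : Type} [DecidableEq α]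

theorem sizeOf_lt_of_mem {α : Type} {c : PTree α} {cs : List (PTree α)}
    (h : c ∈ cs) : sizeOf c < sizeOf (PTree.node cs) := by
  have := List.sizeOf_lt_of_mem h
  simp only [node.sizeOf_spec]; omega

/-- `Subtree s t` : `s` is the complete subtree rooted at some node of `t`. -/
inductive Subtree : PTree α → PTree α → Prop where
  | refl (t : PTree α) : Subtree t t
  | child {s c : PTree α} {cs : List (PTree α)} :
      c ∈ cs → Subtree s c → Subtree s (node cs)

/-- The list of leaf labels of a tree. -/
def labelList : PTree α → List α
  | leaf a => [a]
  | node cs => cs.attach.flatMap (fun c => labelList c.1)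
decreasing_by exact sizeOf_lt_of_mem c.2

/-- The set `L(T)` of leaf labels of a tree. -/
def labels (t : PTree α) : Finset α := t.labelList.toFinset

/-- The size of a tree: the number of its leaves. -/
def treeSize (t : PTree α) : ℕ := t.labels.card

/-- The label set of a possibly empty tree. -/
def olabels : Option (PTree α) → Finset α
  | none => ∅
  | some t => t.labels

/-- Connecting a list of trees by a common root.  The empty list yields the
empty tree and a single tree yields that tree itself (no degree-two node is
created). -/
def connect : List (PTree α) → Option (PTree α)
  | [] => none
  | [t] => some t
  | ts => some (node ts)

/-- The restriction `T|S` of `T` to a label set `S`: all leaves with labels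
outside `S` are removed and all internal nodes of degree two are suppressed. -/
def restrict (S : Finset α) : PTree α → Option (PTree α)
  | leaf a => if a ∈ S then some (leaf a) else none
  | node cs => connect ((cs.attach.map (fun c => restrict S c.1)).reduceOption)
decreasing_by exact sizeOf_lt_of_mem c.2

/-- Restriction of a possibly empty tree. -/
def orestrict (S : Finset α) (t : Option (PTree α)) : Option (PTree α) :=
  t.bind (restrict S)

/-- Isomorphism (equality) of unordered leaf-labelled trees: equality of trees
up to reordering of the children of each node. -/
inductive Iso : PTree α → PTree α → Prop where
  | leaf (a : α) : Iso (leaf a) (leaf a)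
  | node {cs ds ds' : List (PTree α)} :
      List.Forall₂ Iso cs ds' → ds'.Perm ds → Iso (node cs) (node ds)

/-- One edge contraction: the edge between a node and one of its (internal)
children is contracted, merging the child into the parent. -/
inductive Contract : PTree α → PTree α → Prop where
  | top (l r ds : List (PTree α)) :
      Contract (node (l ++ node ds :: r)) (node (l ++ ds ++ r))
  | child {c c' : PTree α} (l r : List (PTree α)) :
      Contract c c' → Contract (node (l ++ c :: r)) (node (l ++ c' :: r))

/-- `T` refines `T'` (written `T ⊵ T'`): `T'` can be obtained (as an
unordered tree) by contracting some edges of `T`. -/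
def Refines (t t' : PTree α) : Prop :=
  ∃ u, Relation.ReflTransGen Contract t u ∧ Iso u t'

/-- Refinement of possibly empty trees. -/
def ORefines : Option (PTree α) → Option (PTree α) → Prop
  | none, none => True
  | some a, some b => Refines a b
  | _, _ => False

/-- Isomorphism (equality) of possibly empty unordered trees. -/
def OIso : Option (PTree α) → Option (PTree α) → Prop
  | none, none => True
  | some a, some b => Iso a b
  | _, _ => False

/-- A possibly empty tree is (empty or) a complete subtree of `T`. -/
def OSubtree (T : PTree α) : Option (PTree α) → Prop
  | none => True
  | some t => Subtree t T

/-- No internal node of degree two (after the usual suppression convention):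
every internal node of the rooted tree has at least two children. -/
def NoUnaryNodes (T : PTree α) : Prop :=
  ∀ cs : List (PTree α), Subtree (node cs) T → 2 ≤ cs.length

/-- Every node of the rooted tree has degree at most `D` (the degree of the
root is its number of children; the degree of any other internal node is its
number of children plus one). -/
def DegLE (D : ℕ) (T : PTree α) : Prop :=
  (∀ cs : List (PTree α), T = node cs → cs.length ≤ D) ∧
  (∀ cs : List (PTree α), Subtree (node cs) T → node cs ≠ T → cs.length + 1 ≤ D)

/-- A rooted tree is binary if every internal node has exactly two children. -/
def Binary (T : PTree α) : Prop :=
  ∀ cs : List (PTree α), Subtree (node cs) T → cs.length = 2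

/-- A cut-subtree of `T`: the empty tree, or the tree obtained by selecting
some (at least one) of the subtrees attached to an internal node of `T` and
connecting those subtrees by a common root. -/
def IsCutSubtree (T : PTree α) (a : Option (PTree α)) : Prop :=
  a = none ∨ ∃ cs sel : List (PTree α),
    Subtree (node cs) T ∧ sel.Sublist cs ∧ sel ≠ [] ∧ a = connect sel

variable {k : ℕ}

/-- A cut-subforest of `𝒯`: each component is a cut-subtree of the
corresponding tree, and at least one component is nonempty. -/
def IsCutSubforest (𝒯 : Fin k → PTree α) (A : Fin k → Option (PTree α)) : Prop :=
  (∀ i, IsCutSubtree (𝒯 i) (A i)) ∧ ∃ i, A i ≠ none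

/-- A sub-forest of `𝒯`: each component is the empty tree or a complete
subtree rooted at some node of the corresponding tree, and at least one
component is nonempty. -/
def IsSubForest (𝒯 : Fin k → PTree α) (A : Fin k → Option (PTree α)) : Prop :=
  (∀ i, OSubtree (𝒯 i) (A i)) ∧ ∃ i, A i ≠ none

/-- The set of all labels occurring in the trees of `𝒯`. -/
def allLabels (𝒯 : Fin k → PTree α) : Finset α :=
  Finset.univ.biUnion fun i => (𝒯 i).labels

/-- A (cut-sub)forest is terminal if each component is the empty tree or a
single leaf of the corresponding tree. -/
def IsTerminal (𝒯 : Fin k → PTree α) (A : Fin k → Option (PTree α)) : Prop :=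
  ∀ i, A i = none ∨ ∃ a : α, A i = some (leaf a) ∧ Subtree (leaf a) (𝒯 i)

/-- `Λ(𝒜) = { l ∈ ⋃_j L(𝒜⁽ʲ⁾) ∣ ∀ i, l ∉ L(𝒯⁽ⁱ⁾) − L(𝒜⁽ⁱ⁾) }`. -/
def lambdaSet (𝒯 : Fin k → PTree α) (A : Fin k → Option (PTree α)) : Finset α :=
  (Finset.univ.biUnion fun j => olabels (A j)).filter
    fun l => ∀ i, l ∉ (𝒯 i).labels \ olabels (A i)

/-- `Y` is a compatible supertree of the forest `A`:
`Y|L(A⁽ⁱ⁾) ⊵ A⁽ⁱ⁾|L(Y)` for every `i`. -/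
def IsCompatibleSupertree (A : Fin k → Option (PTree α)) (Y : PTree α) : Prop :=
  ∀ i, ORefines (restrict (olabels (A i)) Y) (orestrict Y.labels (A i))

/-- `X` is an agreement supertree of the forest `A`:
`X|L(A⁽ⁱ⁾) = A⁽ⁱ⁾|L(X)` (as unordered trees) for every `i`. -/
def IsAgreementSupertree (A : Fin k → Option (PTree α)) (X : PTree α) : Prop :=
  ∀ i, OIso (restrict (olabels (A i)) X) (orestrict X.labels (A i))

/-- An embedded supertree of a cut-subforest `A` of `𝒯`: a distinctly
leaf-labelled compatible supertree `Y` of `A`, with leaves labelled by labels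
of `𝒯`, such that `L(Y) ∩ L(𝒯⁽ⁱ⁾) ⊆ L(A⁽ⁱ⁾)` for all `i`. -/
def IsEmbeddedSupertree (𝒯 : Fin k → PTree α) (A : Fin k → Option (PTree α))
    (Y : PTree α) : Prop :=
  Y.labelList.Nodup ∧ Y.labels ⊆ allLabels 𝒯 ∧
  IsCompatibleSupertree A Y ∧
  ∀ i, Y.labels ∩ (𝒯 i).labels ⊆ olabels (A i)

/-- An enclosed supertree of a sub-forest `A` of `𝒯`: a distinctly
leaf-labelled agreement supertree `X` of `A`, with leaves labelled by labels
of `𝒯`, such that `L(X) ∩ L(𝒯⁽ⁱ⁾) ⊆ L(A⁽ⁱ⁾)` for all `i`. -/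
def IsEnclosedSupertree (𝒯 : Fin k → PTree α) (A : Fin k → Option (PTree α))
    (X : PTree α) : Prop :=
  X.labelList.Nodup ∧ X.labels ⊆ allLabels 𝒯 ∧
  IsAgreementSupertree A X ∧
  ∀ i, X.labels ∩ (𝒯 i).labels ⊆ olabels (A i)

/-- `mcsp 𝒯 A` : the maximum size of an embedded supertree of `A`. -/
noncomputable def mcsp (𝒯 : Fin k → PTree α) (A : Fin k → Option (PTree α)) : ℕ :=
  sSup {m : ℕ | ∃ Y : PTree α, IsEmbeddedSupertree 𝒯 A Y ∧ m = Y.treeSize}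

/-- `masp 𝒯 A` : the maximum size of an enclosed supertree of `A`. -/
noncomputable def masp (𝒯 : Fin k → PTree α) (A : Fin k → Option (PTree α)) : ℕ :=
  sSup {m : ℕ | ∃ X : PTree α, IsEnclosedSupertree 𝒯 A X ∧ m = X.treeSize}

end PTree

/-- `ListSplit s l r` : the list `s` is partitioned into the two
(complementary) sublists `l` and `r`. -/
inductive ListSplit {β : Type} : List β → List β → List β → Prop where
  | nil : ListSplit [] [] []
  | left {s l r : List β} (x : β) : ListSplit s l r → ListSplit (x :: s) (x :: l) r
  | right {s l r : List β} (x : β) : ListSplit s l r → ListSplit (x :: s) l (x :: r)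

namespace PTree

variable {α : Type} [DecidableEq α] {k : ℕ}

/-- `(AL, AR)` is a bipartite of the forest `A`: for every `i` the set of
subtrees attached to the root of `A⁽ⁱ⁾` is partitioned into two sets, each of
which is connected by a common root to form `AL⁽ⁱ⁾` resp. `AR⁽ⁱ⁾` (an empty
set of subtrees yielding the empty tree). -/
def IsBipartite (A AL AR : Fin k → Option (PTree α)) : Prop :=
  ∀ i, ∃ s sL sR : List (PTree α),
    A i = connect s ∧ ListSplit s sL sR ∧ AL i = connect sL ∧ AR i = connect sR

/-- Condition, at one component, for `(b 1, …, b d)` to decompose `a`: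
either exactly one `b j` is isomorphic to `a` and the others are empty, or at
least two of the `b j` are nonempty and the nonempty ones are isomorphic to
pairwise distinct subtrees attached to the root of `a`. -/
def DecompAt {d : ℕ} (a : Option (PTree α)) (b : Fin d → Option (PTree α)) : Prop :=
  (∃ j, OIso (b j) a ∧ ∀ j', j' ≠ j → b j' = none) ∨
  (∃ cs : List (PTree α), a = some (node cs) ∧
    2 ≤ (Finset.univ.filter fun j => (b j).isSome).card ∧
    ∃ idx : Fin d → Option (Fin cs.length),
      (∀ j, b j = none ↔ idx j = none) ∧
      (∀ j t m, b j = some t → idx j = some m → Iso t (cs.get m)) ∧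
      (∀ j j' m, idx j = some m → idx j' = some m → j = j'))

/-- `(B 1, …, B d)` is a decomposition of the forest `A` (each `B j` being a
possibly empty sub-forest of `𝒯`). -/
def IsDecomposition (𝒯 : Fin k → PTree α) (A : Fin k → Option (PTree α))
    (d : ℕ) (B : Fin d → Fin k → Option (PTree α)) : Prop :=
  2 ≤ d ∧ (∀ j i, OSubtree (𝒯 i) (B j i)) ∧ ∀ i, DecompAt (A i) fun j => B j i

/-- The root of the (nonempty) cut-subtree `a` is an internal node of `T`,
i.e. `a` is the complete subtree of `T` rooted at an internal node of `T`. -/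
def InternalRooted (T : PTree α) : Option (PTree α) → Prop
  | none => False
  | some t => (∃ cs : List (PTree α), t = node cs) ∧ Subtree t T

/-- One rerooting step: the root is moved to an adjacent internal node. -/
inductive Reroot1 : PTree α → PTree α → Prop where
  | step (l r ds : List (PTree α)) :
      Reroot1 (node (l ++ node ds :: r)) (node (ds ++ [node (l ++ r)]))

/-- `F` is a rooted variant of the unrooted tree (represented by) `T`:
`F` is obtained by rooting `T` at some internal node. -/
def RootedVariant (T F : PTree α) : Prop := Relation.ReflTransGen Reroot1 T F

/-- A maximal subtree of the unrooted tree (represented by) `T`: a rooted tree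
obtained by first rooting `T` at some internal node and then removing at most
one nontrivial subtree attached to that node. -/
def IsMaximalSubtree (T A : PTree α) : Prop :=
  ∃ cs : List (PTree α), RootedVariant T (node cs) ∧
    (A = node cs ∨ ∃ l r ds : List (PTree α), cs = l ++ node ds :: r ∧ A = node (l ++ r))

/-- `T` (a rooted tree, rooted at an internal node) represents an unrooted
tree without vertices of degree two: the root has at least three neighbours
and every other internal vertex has at least three neighbours as well. -/
def IsUnrootedRep (T : PTree α) : Prop :=
  (∃ cs : List (PTree α), T = node cs ∧ 3 ≤ cs.length) ∧
  ∀ cs : List (PTree α), Subtree (node cs) T → node cs ≠ T → 2 ≤ cs.length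

end PTree

section Aux
set_option linter.unusedSectionVars false
namespace PTree
variable {α : Type} [DecidableEq α]

theorem ptree_ind {P : PTree α → Prop} (hleaf : ∀ a, P (leaf a))
    (hnode : ∀ cs : List (PTree α), (∀ c ∈ cs, P c) → P (node cs)) :
    ∀ t, P t :=
  fun t => PTree.rec (motive_1 := fun t => P t)
    (motive_2 := fun l => ∀ c ∈ l, P c)
    hleaf hnode (fun c hc => absurd hc List.not_mem_nil)
    (fun {c} {l} hc hl x hx => by
      rcases List.mem_cons.1 hx with h | h
      · exact h ▸ hc
      · exact hl x h) t

theorem labelList_node (cs : List (PTree α)) :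
    labelList (node cs) = (cs.map labelList).flatten := by
  rw [labelList, List.flatMap_def, List.attach_map_val]

theorem mem_labels {a : α} {t : PTree α} : a ∈ t.labels ↔ a ∈ t.labelList :=
  List.mem_toFinset

theorem mem_labels_node {a : α} {cs : List (PTree α)} :
    a ∈ (node cs).labels ↔ ∃ c ∈ cs, a ∈ c.labels := by
  simp [mem_labels, labelList_node, List.mem_flatten]

theorem restrict_node (S : Finset α) (cs : List (PTree α)) :
    restrict S (node cs) = connect ((cs.map (restrict S)).reduceOption) := by
  rw [restrict, List.attach_map_val]

theorem labels_subset_of_subtree {s t : PTree α} (h : Subtree s t) :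
    s.labels ⊆ t.labels := by
  induction h with
  | refl => exact Finset.Subset.refl _
  | child hmem _ ih =>
    intro a ha
    exact mem_labels_node.2 ⟨_, hmem, ih ha⟩

theorem nodup_of_subtree {s t : PTree α} (h : Subtree s t)
    (ht : t.labelList.Nodup) : s.labelList.Nodup := by
  induction h with
  | refl => exact ht
  | child h1 _ ih =>
    apply ih
    rw [labelList_node, List.nodup_flatten] at ht
    exact ht.1 _ (List.mem_map_of_mem (f := labelList) h1)

theorem disjoint_children {cs : List (PTree α)} (h : (node cs).labelList.Nodup)
    {m m' : Fin cs.length} (hne : m ≠ m') :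
    Disjoint (cs.get m).labels (cs.get m').labels := by
  rw [labelList_node, List.nodup_flatten] at h
  have hpw := h.2
  rw [List.pairwise_iff_get] at hpw
  rw [Finset.disjoint_left]
  intro a ha ha'
  rw [mem_labels] at ha ha'
  have hlen : (cs.map labelList).length = cs.length := List.length_map _
  rcases lt_or_gt_of_ne (show (m : ℕ) ≠ (m' : ℕ) from fun hh => hne (Fin.ext hh)) with hlt | hgt
  · have := hpw ⟨m, by omega⟩ ⟨m', by omega⟩ hlt
    simp only [List.get_eq_getElem, List.getElem_map] at this
    exact this ha ha'
  · have := hpw ⟨m', by omega⟩ ⟨m, by omega⟩ hgt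
    simp only [List.get_eq_getElem, List.getElem_map] at this
    exact this ha' ha

end PTree
end Aux
section Aux2
set_option linter.unusedSectionVars false
namespace PTree
variable {α : Type} [DecidableEq α]

theorem forall2_perm_left {β γ : Type _} {R : β → γ → Prop} :
    ∀ {l₁ l₂ : List β} {l₃ : List γ}, l₁.Perm l₂ → List.Forall₂ R l₁ l₃ →
    ∃ l₄, l₃.Perm l₄ ∧ List.Forall₂ R l₂ l₄ := by
  intro l₁ l₂ l₃ hp
  induction hp generalizing l₃ with
  | nil =>
    intro h; cases h; exact ⟨[], List.Perm.refl _, List.Forall₂.nil⟩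
  | cons x _ ih =>
    intro h
    cases h with
    | cons hR h' =>
      obtain ⟨l₄, hperm, hF⟩ := ih h'
      exact ⟨_ :: l₄, hperm.cons _, List.Forall₂.cons hR hF⟩
  | swap x y l =>
    intro h
    cases h with
    | cons h1 h2 =>
      cases h2 with
      | cons h3 h4 =>
        exact ⟨_ :: _ :: _, List.Perm.swap _ _ _, .cons h3 (.cons h1 h4)⟩
  | trans _ _ ih1 ih2 =>
    intro h
    obtain ⟨l₄, p4, f4⟩ := ih1 h
    obtain ⟨l₅, p5, f5⟩ := ih2 f4
    exact ⟨l₅, p4.trans p5, f5⟩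

theorem forall2_swap_of {β γ : Type _} {R : β → γ → Prop} {S : γ → β → Prop} :
    ∀ {l : List β} {m : List γ}, List.Forall₂ R l m →
    (∀ a ∈ l, ∀ b, R a b → S b a) → List.Forall₂ S m l := by
  intro l m h
  induction h with
  | nil => intro _; exact .nil
  | cons h1 _ ih =>
    intro hs
    exact .cons (hs _ (List.mem_cons_self) _ h1)
      (ih fun a ha b hab => hs a (List.mem_cons_of_mem _ ha) b hab)

theorem forall2_trans_of {β γ δ : Type _} {R : β → γ → Prop} {S : γ → δ → Prop}
    {T : β → δ → Prop} :
    ∀ {l : List β} {m : List γ} {n : List δ}, List.Forall₂ R l m → List.Forall₂ S m n →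
    (∀ a ∈ l, ∀ b c, R a b → S b c → T a c) → List.Forall₂ T l n := by
  intro l m n h
  induction h generalizing n with
  | nil => intro h2 _; cases h2; exact .nil
  | cons h1 _ ih =>
    intro h2 hs
    cases h2 with
    | cons h3 h4 =>
      exact .cons (hs _ (List.mem_cons_self) _ _ h1 h3)
        (ih h4 fun a ha b c hab hbc => hs a (List.mem_cons_of_mem _ ha) b c hab hbc)

theorem forall2_imp_of_mem {β γ : Type _} {R S : β → γ → Prop} :
    ∀ {l : List β} {m : List γ}, List.Forall₂ R l m →
    (∀ a ∈ l, ∀ b, R a b → S a b) → List.Forall₂ S l m := by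
  intro l m h
  induction h with
  | nil => intro _; exact .nil
  | cons h1 _ ih =>
    intro hs
    exact .cons (hs _ (List.mem_cons_self) _ h1)
      (ih fun a ha b hab => hs a (List.mem_cons_of_mem _ ha) b hab)

theorem flatten_perm_of_forall2 {β : Type _} :
    ∀ {L M : List (List β)}, List.Forall₂ (fun l m => l.Perm m) L M →
    L.flatten.Perm M.flatten := by
  intro L M h
  induction h with
  | nil => exact List.Perm.refl _
  | cons hh _ ihh => simpa using hh.append ihh

theorem iso_refl : ∀ t : PTree α, Iso t t :=
  ptree_ind (fun a => Iso.leaf a)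
    (fun cs ih => Iso.node (List.forall₂_same.2 ih) (List.Perm.refl cs))

theorem iso_symm : ∀ {t u : PTree α}, Iso t u → Iso u t := by
  have : ∀ t : PTree α, ∀ u, Iso t u → Iso u t := by
    refine ptree_ind ?_ ?_
    · intro a u h; cases h; exact Iso.leaf a
    · intro cs ih u h
      cases h with
      | node hF hp =>
        have hF2 := forall2_swap_of hF fun c hc b hcb => ih c hc b hcb
        obtain ⟨l₄, p4, f4⟩ := forall2_perm_left hp hF2
        exact Iso.node f4 p4.symm
  exact fun {t u} h => this t u h

theorem iso_trans : ∀ {t u v : PTree α}, Iso t u → Iso u v → Iso t v := by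
  have : ∀ t : PTree α, ∀ u v, Iso t u → Iso u v → Iso t v := by
    refine ptree_ind ?_ ?_
    · intro a u v h1 h2; cases h1; exact h2
    · intro cs ih u v h1 h2
      cases h1 with
      | node hF1 hp1 =>
        cases h2 with
        | node hF2 hp2 =>
          obtain ⟨l₄, p4, f4⟩ := forall2_perm_left hp1.symm hF2
          have := forall2_trans_of hF1 f4 fun a ha b c hab hbc => ih a ha b c hab hbc
          exact Iso.node this (p4.symm.trans hp2)
  exact fun {t u v} h1 h2 => this t u v h1 h2

theorem labelList_perm_of_iso : ∀ {t u : PTree α}, Iso t u → t.labelList.Perm u.labelList := by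
  have : ∀ t : PTree α, ∀ u, Iso t u → t.labelList.Perm u.labelList := by
    refine ptree_ind ?_ ?_
    · intro a u h; cases h; exact List.Perm.refl _
    · intro cs ih u h
      cases h with
      | @node _ ds ds' hF hp =>
        rw [labelList_node, labelList_node]
        have h1 : List.Forall₂ (fun l m : List α => l.Perm m)
            (cs.map labelList) (ds'.map labelList) := by
          rw [List.forall₂_map_right_iff, List.forall₂_map_left_iff]
          exact forall2_imp_of_mem hF fun a ha b hab => ih a ha b hab
        exact (flatten_perm_of_forall2 h1).trans ((hp.map labelList).flatten)
  exact fun {t u} h => this t u h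

theorem labels_eq_of_iso {t u : PTree α} (h : Iso t u) : t.labels = u.labels :=
  Finset.ext fun a => by
    simp only [labels, List.mem_toFinset]
    exact (labelList_perm_of_iso h).mem_iff

theorem treeSize_eq_of_iso {t u : PTree α} (h : Iso t u) : t.treeSize = u.treeSize := by
  rw [treeSize, treeSize, labels_eq_of_iso h]

theorem oiso_refl : ∀ o : Option (PTree α), OIso o o
  | none => trivial
  | some t => iso_refl t

theorem oiso_symm : ∀ {o p : Option (PTree α)}, OIso o p → OIso p o
  | none, none, _ => trivial
  | some _, some _, h => iso_symm h

theorem oiso_trans : ∀ {o p q : Option (PTree α)}, OIso o p → OIso p q → OIso o q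
  | none, none, none, _, _ => trivial
  | some _, some _, some _, h1, h2 => iso_trans h1 h2

theorem olabels_eq_of_oiso : ∀ {o p : Option (PTree α)}, OIso o p → olabels o = olabels p
  | none, none, _ => rfl
  | some _, some _, h => labels_eq_of_iso h

end PTree
end Aux2
section Aux3
set_option linter.unusedSectionVars false
namespace PTree
variable {α : Type} [DecidableEq α]

theorem labelList_leaf (a : α) : labelList (leaf a) = [a] := by rw [labelList]

theorem mem_labels_leaf {a b : α} : a ∈ (leaf b).labels ↔ a = b := by
  simp [mem_labels, labelList_leaf]

theorem restrict_leaf (S : Finset α) (a : α) :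
    restrict S (leaf a) = if a ∈ S then some (leaf a) else none := by rw [restrict]

theorem connect_eq_node {L : List (PTree α)} (h : 2 ≤ L.length) :
    connect L = some (node L) := by
  match L with
  | a :: b :: l => rfl

theorem reduceOption_eq_nil {β : Type _} {l : List (Option β)}
    (h : ∀ x ∈ l, x = none) : l.reduceOption = [] := by
  induction l with
  | nil => rfl
  | cons x t ih =>
    have hx := h x (List.mem_cons_self)
    subst hx
    rw [List.reduceOption_cons_of_none]
    exact ih fun y hy => h y (List.mem_cons_of_mem _ hy)

theorem perm_reduceOption {β : Type _} {l m : List (Option β)} (h : l.Perm m) :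
    l.reduceOption.Perm m.reduceOption := by
  simpa [List.reduceOption] using h.filterMap id

theorem forall2_reduceOption :
    ∀ {L M : List (Option (PTree α))}, List.Forall₂ OIso L M →
    List.Forall₂ Iso L.reduceOption M.reduceOption := by
  intro L M h
  induction h with
  | nil => exact .nil
  | @cons a b l m h1 _ ih =>
    match a, b, h1 with
    | none, none, _ =>
      rw [List.reduceOption_cons_of_none, List.reduceOption_cons_of_none]; exact ih
    | some x, some y, h1 =>
      rw [List.reduceOption_cons_of_some, List.reduceOption_cons_of_some]
      exact .cons h1 ih

theorem connect_oiso {L M M' : List (PTree α)} (h : List.Forall₂ Iso L M')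
    (hp : M'.Perm M) : OIso (connect L) (connect M) := by
  have hLM' := h.length_eq
  have hM'M := hp.length_eq
  match L, M', M, h with
  | [], [], M, _ =>
    have : M = [] := List.length_eq_zero_iff.1 (by simp at hM'M; omega)
    subst this; exact trivial
  | [t], [u], M, h =>
    have : M = [u] := (List.singleton_perm.1 hp).symm
    subst this
    cases h with
    | cons h1 _ => exact h1
  | a :: b :: l, x :: y :: m, M, h =>
    rw [connect_eq_node (by simp), connect_eq_node (by simp at hM'M ⊢; omega)]
    exact Iso.node h hp

theorem restrict_congr {S S' : Finset α} :
    ∀ t : PTree α, (∀ a ∈ t.labels, (a ∈ S ↔ a ∈ S')) → restrict S t = restrict S' t := by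
  refine ptree_ind ?_ ?_
  · intro a h
    rw [restrict_leaf, restrict_leaf]
    by_cases ha : a ∈ S
    · rw [if_pos ha, if_pos ((h a (mem_labels_leaf.2 rfl)).1 ha)]
    · rw [if_neg ha, if_neg (fun hs => ha ((h a (mem_labels_leaf.2 rfl)).2 hs))]
  · intro cs ih h
    rw [restrict_node, restrict_node]
    congr 2
    apply List.map_congr_left
    intro c hc
    exact ih c hc fun a ha => h a (mem_labels_node.2 ⟨c, hc, ha⟩)

theorem restrict_eq_none {S : Finset α} :
    ∀ t : PTree α, (∀ a ∈ t.labels, a ∉ S) → restrict S t = none := by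
  refine ptree_ind ?_ ?_
  · intro a h
    rw [restrict_leaf, if_neg (h a (mem_labels_leaf.2 rfl))]
  · intro cs ih h
    rw [restrict_node]
    have : (cs.map (restrict S)).reduceOption = [] := by
      apply reduceOption_eq_nil
      intro x hx
      obtain ⟨c, hc, rfl⟩ := List.mem_map.1 hx
      exact ih c hc fun a ha => h a (mem_labels_node.2 ⟨c, hc, ha⟩)
    rw [this]; rfl

theorem oiso_restrict {S : Finset α} :
    ∀ {t u : PTree α}, Iso t u → OIso (restrict S t) (restrict S u) := by
  have : ∀ t : PTree α, ∀ u, Iso t u → OIso (restrict S t) (restrict S u) := by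
    refine ptree_ind ?_ ?_
    · intro a u h; cases h; exact oiso_refl _
    · intro cs ih u h
      cases h with
      | @node _ ds ds' hF hp =>
        rw [restrict_node, restrict_node]
        have h1 : List.Forall₂ OIso (cs.map (restrict S)) (ds'.map (restrict S)) := by
          rw [List.forall₂_map_right_iff, List.forall₂_map_left_iff]
          exact forall2_imp_of_mem hF fun a ha b hab => ih a ha b hab
        exact connect_oiso (forall2_reduceOption h1)
          (perm_reduceOption (hp.map (restrict S)))
  exact fun {t u} h => this t u h

end PTree
end Aux3
section Aux4
set_option linter.unusedSectionVars false
namespace PTree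
variable {α : Type} [DecidableEq α]

theorem reduceOption_eq_flatMap {β : Type _} (l : List (Option β)) :
    l.reduceOption = l.flatMap Option.toList := by
  induction l with
  | nil => rfl
  | cons x t ih =>
    cases x <;>
      simp [List.reduceOption_cons_of_none, List.reduceOption_cons_of_some, ih]

theorem flatMap_eq_nil {β γ : Type _} {l : List β} {f : β → List γ}
    (h : ∀ x ∈ l, f x = []) : l.flatMap f = [] := by
  induction l with
  | nil => rfl
  | cons x t ih =>
    rw [List.flatMap_cons, h x (List.mem_cons_self), List.nil_append]
    exact ih fun y hy => h y (List.mem_cons_of_mem _ hy)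

theorem forall2_map_same {β γ δ : Type _} {l : List β} {f : β → γ} {g : β → δ}
    {R : γ → δ → Prop} (h : ∀ x ∈ l, R (f x) (g x)) :
    List.Forall₂ R (l.map f) (l.map g) := by
  rw [List.forall₂_map_right_iff, List.forall₂_map_left_iff]
  exact List.forall₂_same.2 h

theorem connect_toList (o : Option (PTree α)) : connect o.toList = o := by
  cases o <;> rfl

theorem oiso_none_right : ∀ {o : Option (PTree α)}, OIso o none → o = none
  | none, _ => rfl

theorem reduceOption_map_single {β γ : Type _} {l : List β} (hl : l.Nodup)
    {f : β → Option γ} {j₀ : β} (hj : j₀ ∈ l)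
    (h : ∀ j ∈ l, j ≠ j₀ → f j = none) :
    (l.map f).reduceOption = (f j₀).toList := by
  induction l with
  | nil => cases hj
  | cons x t ih =>
    by_cases hx : x = j₀
    · subst hx
      have ht : (t.map f).reduceOption = [] := by
        apply reduceOption_eq_nil
        intro y hy
        obtain ⟨j, hjt, rfl⟩ := List.mem_map.1 hy
        exact h j (List.mem_cons_of_mem _ hjt) (fun hh => (List.nodup_cons.1 hl).1 (hh ▸ hjt))
      rw [List.map_cons, reduceOption_eq_flatMap, List.flatMap_cons,
        ← reduceOption_eq_flatMap, ht, List.append_nil]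
    · have hx' : f x = none := h x (List.mem_cons_self) hx
      rw [List.map_cons, hx', List.reduceOption_cons_of_none]
      exact ih (List.nodup_cons.1 hl).2
        (List.mem_of_ne_of_mem (fun hh => hx hh.symm) hj)
        (fun j hjt hne => h j (List.mem_cons_of_mem _ hjt) hne)

/-- Key permutation lemma. -/
theorem perm_key {β γ δ : Type _} [DecidableEq δ] {F : δ → Option γ} {p : β → Option δ} :
    ∀ (l : List β) (ms : List δ), l.Nodup → ms.Nodup →
    (∀ j ∈ l, ∀ j' ∈ l, ∀ m, p j = some m → p j' = some m → j = j') →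
    (∀ m ∈ ms, F m ≠ none → ∃ j ∈ l, p j = some m) →
    (∀ j ∈ l, ∀ m, p j = some m → m ∈ ms) →
    (ms.flatMap fun m => (F m).toList).Perm
      (l.flatMap fun j => ((p j).bind F).toList) := by
  intro l
  induction l with
  | nil =>
    intro ms _ _ _ hcov _
    have : (ms.flatMap fun m => (F m).toList) = [] := by
      apply flatMap_eq_nil
      intro m hm
      by_cases hF : F m = none
      · rw [hF]; rfl
      · obtain ⟨j, hj, _⟩ := hcov m hm hF
        cases hj
    rw [this]; rfl
  | cons j t ih =>
    intro ms hl hms hinj hcov hmem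
    match hp : p j with
    | none =>
      rw [List.flatMap_cons, hp]
      show (ms.flatMap fun m => (F m).toList).Perm ([] ++ _)
      rw [List.nil_append]
      apply ih ms (List.nodup_cons.1 hl).2 hms
      · intro a ha b hb m h1 h2
        exact hinj a (List.mem_cons_of_mem _ ha) b (List.mem_cons_of_mem _ hb) m h1 h2
      · intro m hm hF
        obtain ⟨j', hj', hpj'⟩ := hcov m hm hF
        rcases List.mem_cons.1 hj' with rfl | hj't
        · rw [hp] at hpj'; cases hpj'
        · exact ⟨j', hj't, hpj'⟩
      · intro a ha m hpa
        exact hmem a (List.mem_cons_of_mem _ ha) m hpa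
    | some m =>
      have hmms : m ∈ ms := hmem j (List.mem_cons_self) m hp
      have hperm := List.perm_cons_erase hmms
      refine ((hperm.flatMap_right _).trans ?_)
      rw [List.flatMap_cons, List.flatMap_cons, hp, Option.bind_some]
      apply List.Perm.append_left
      apply ih (ms.erase m) (List.nodup_cons.1 hl).2 (hms.erase m)
      · intro a ha b hb m' h1 h2
        exact hinj a (List.mem_cons_of_mem _ ha) b (List.mem_cons_of_mem _ hb) m' h1 h2
      · intro m' hm' hF
        have hm'ms : m' ∈ ms := List.mem_of_mem_erase hm'
        obtain ⟨j', hj', hpj'⟩ := hcov m' hm'ms hF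
        rcases List.mem_cons.1 hj' with rfl | hj't
        · rw [hp] at hpj'
          cases hpj'
          exact absurd hm' (hms.not_mem_erase)
        · exact ⟨j', hj't, hpj'⟩
      · intro a ha m' hpa
        have hm' : m' ∈ ms := hmem a (List.mem_cons_of_mem _ ha) m' hpa
        have hne : m' ≠ m := by
          rintro rfl
          exact (List.nodup_cons.1 hl).1
            (hinj a (List.mem_cons_of_mem _ ha) j (List.mem_cons_self) m' hpa hp ▸ ha)
        exact (List.mem_erase_of_ne hne).2 hm'

end PTree
end Aux4
section Aux5
set_option linter.unusedSectionVars false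
namespace PTree
variable {α : Type} [DecidableEq α]

theorem combine {k : ℕ} (𝒯 : Fin k → PTree α)
    (hphylo : ∀ i, (𝒯 i).labelList.Nodup)
    (A : Fin k → Option (PTree α)) (hA : IsSubForest 𝒯 A)
    {d : ℕ} (B : Fin d → Fin k → Option (PTree α))
    (hdec : IsDecomposition 𝒯 A d B)
    (J : Finset (Fin d)) (X : Fin d → PTree α)
    (hX : ∀ j ∈ J, IsEnclosedSupertree 𝒯 (B j) (X j)) :
    ∃ Z : PTree α, IsEnclosedSupertree 𝒯 A Z ∧ Z.treeSize = ∑ j ∈ J, (X j).treeSize := by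
  obtain ⟨hd2, hBsub, hDA⟩ := hdec
  obtain ⟨hAsub, hAne⟩ := hA
  -- subset facts
  have hSA_sub : ∀ i, olabels (A i) ⊆ (𝒯 i).labels := by
    intro i
    match hAi : A i with
    | none => simp [olabels]
    | some a =>
      have := hAsub i; rw [hAi] at this
      exact labels_subset_of_subtree this
  have H2 : ∀ i j, olabels (B j i) ⊆ olabels (A i) := by
    intro i j a ha
    rcases hDA i with ⟨j₀, hiso, hrest⟩ | ⟨cs, hAi, _, idx, hni, hisoI, hinj⟩
    · replace hiso : OIso (B j₀ i) (A i) := hiso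
      replace hrest : ∀ j', j' ≠ j₀ → B j' i = none := hrest
      by_cases hj : j = j₀
      · subst hj; rwa [← olabels_eq_of_oiso hiso]
      · rw [hrest j hj] at ha; cases ha
    · replace hni : ∀ j, B j i = none ↔ idx j = none := hni
      replace hisoI : ∀ j t m, B j i = some t → idx j = some m → Iso t (cs.get m) := hisoI
      match hB : B j i with
      | none => rw [hB] at ha; cases ha
      | some t =>
        have hidx : idx j ≠ none := fun h => by
          rw [← hni] at h; rw [h] at hB; cases hB
        obtain ⟨m, hm⟩ := Option.ne_none_iff_exists'.1 hidx
        have hiso2 := hisoI j t m hB hm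
        rw [hB] at ha
        have : a ∈ (cs.get m).labels := labels_eq_of_iso hiso2 ▸ ha
        rw [hAi]
        exact mem_labels_node.2 ⟨cs.get m, List.get_mem cs m, this⟩
  have Hsubcs : ∀ i (cs : List (PTree α)), A i = some (node cs) →
      (node cs).labelList.Nodup := by
    intro i cs hAi
    have := hAsub i; rw [hAi] at this
    exact nodup_of_subtree this (hphylo i)
  have H1 : ∀ i j j', j ≠ j' → ∀ a, a ∈ olabels (B j i) → a ∈ olabels (B j' i) → False := by
    intro i j j' hne a ha ha'
    rcases hDA i with ⟨j₀, hiso, hrest⟩ | ⟨cs, hAi, _, idx, hni, hisoI, hinj⟩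
    · replace hrest : ∀ j'', j'' ≠ j₀ → B j'' i = none := hrest
      by_cases h : j = j₀
      · rw [hrest j' (fun hh => hne (h.trans hh.symm))] at ha'; cases ha'
      · rw [hrest j h] at ha; cases ha
    · replace hni : ∀ j, B j i = none ↔ idx j = none := hni
      replace hisoI : ∀ j t m, B j i = some t → idx j = some m → Iso t (cs.get m) := hisoI
      match hB : B j i, hB' : B j' i with
      | none, _ => rw [hB] at ha; cases ha
      | _, none => rw [hB'] at ha'; cases ha'
      | some t, some t' =>
        rw [hB] at ha; rw [hB'] at ha'
        have hidx : idx j ≠ none := fun h => by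
          rw [← hni] at h; rw [h] at hB; cases hB
        have hidx' : idx j' ≠ none := fun h => by
          rw [← hni] at h; rw [h] at hB'; cases hB'
        obtain ⟨m, hm⟩ := Option.ne_none_iff_exists'.1 hidx
        obtain ⟨m', hm'⟩ := Option.ne_none_iff_exists'.1 hidx'
        have hmm : m ≠ m' := fun h => hne (hinj j j' m hm (h ▸ hm'))
        have h1 : a ∈ (cs.get m).labels := labels_eq_of_iso (hisoI j t m hB hm) ▸ ha
        have h2 : a ∈ (cs.get m').labels := labels_eq_of_iso (hisoI j' t' m' hB' hm') ▸ ha'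
        exact Finset.disjoint_left.1 (disjoint_children (Hsubcs i cs hAi) hmm) h1 h2
  -- the tree Z
  set l : List (PTree α) := J.toList.map X with hl
  set Z : PTree α := node l with hZ
  have hZmem : ∀ a, a ∈ Z.labels ↔ ∃ j ∈ J, a ∈ (X j).labels := by
    intro a
    rw [hZ, mem_labels_node]
    constructor
    · rintro ⟨c, hc, hac⟩
      obtain ⟨j, hj, rfl⟩ := List.mem_map.1 hc
      exact ⟨j, Finset.mem_toList.1 hj, hac⟩
    · rintro ⟨j, hj, haj⟩
      exact ⟨X j, List.mem_map_of_mem (f := X) (Finset.mem_toList.2 hj), haj⟩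
  have KeyZ : ∀ a i, a ∈ Z.labels → a ∈ (𝒯 i).labels →
      ∃ j ∈ J, a ∈ (X j).labels ∧ a ∈ olabels (B j i) := by
    intro a i haZ haT
    obtain ⟨j, hj, haj⟩ := (hZmem a).1 haZ
    exact ⟨j, hj, haj, (hX j hj).2.2.2 i (Finset.mem_inter.2 ⟨haj, haT⟩)⟩
  have Fdisj : ∀ j ∈ J, ∀ j' ∈ J, j ≠ j' → Disjoint ((X j).labels) ((X j').labels) := by
    intro j hj j' hj' hne
    rw [Finset.disjoint_left]
    intro a ha ha'
    have : a ∈ allLabels 𝒯 := (hX j hj).2.1 ha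
    obtain ⟨i, _, hi⟩ := Finset.mem_biUnion.1 this
    exact H1 i j j' hne a
      ((hX j hj).2.2.2 i (Finset.mem_inter.2 ⟨ha, hi⟩))
      ((hX j' hj').2.2.2 i (Finset.mem_inter.2 ⟨ha', hi⟩))
  have nodupZ : Z.labelList.Nodup := by
    rw [hZ, labelList_node, List.nodup_flatten]
    constructor
    · intro l' hl'
      obtain ⟨c, hc, rfl⟩ := List.mem_map.1 hl'
      obtain ⟨j, hj, rfl⟩ := List.mem_map.1 hc
      exact (hX j (Finset.mem_toList.1 hj)).1
    · rw [hl, List.map_map, List.pairwise_map]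
      refine List.Pairwise.imp_of_mem ?_ (Finset.nodup_toList J)
      intro j j' hj hj' hne
      rw [List.disjoint_left]
      intro a ha ha'
      have h1 : a ∈ (X j).labels := mem_labels.2 ha
      have h2 : a ∈ (X j').labels := mem_labels.2 ha'
      exact Finset.disjoint_left.1
        (Fdisj j (Finset.mem_toList.1 hj) j' (Finset.mem_toList.1 hj') hne) h1 h2
  have hZsub : Z.labels ⊆ allLabels 𝒯 := by
    intro a ha
    obtain ⟨j, hj, haj⟩ := (hZmem a).1 ha
    exact (hX j hj).2.1 haj
  have sizeZ : Z.treeSize = ∑ j ∈ J, (X j).treeSize := by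
    have hlab : Z.labels = J.biUnion fun j => (X j).labels := by
      ext a; rw [hZmem a, Finset.mem_biUnion]
    rw [treeSize, hlab, Finset.card_biUnion Fdisj]
    rfl
  have cond4 : ∀ i, Z.labels ∩ (𝒯 i).labels ⊆ olabels (A i) := by
    intro i a ha
    obtain ⟨j, _, _, hab⟩ := KeyZ a i (Finset.mem_inter.1 ha).1 (Finset.mem_inter.1 ha).2
    exact H2 i j hab
  -- the agreement condition
  have agree : IsAgreementSupertree A Z := by
    intro i
    set SA := olabels (A i) with hSA
    set W : List (Option (PTree α)) :=
      J.toList.map (fun j => orestrict (X j).labels (B j i)) with hW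
    have step1 : OIso (restrict SA Z) (connect W.reduceOption) := by
      rw [hZ, restrict_node, hl, List.map_map]
      refine connect_oiso (forall2_reduceOption ?_) (List.Perm.refl _)
      rw [hW]
      apply forall2_map_same
      intro j hj
      have hjJ := Finset.mem_toList.1 hj
      have hC1 : restrict SA ((restrict SA ∘ X) j |> fun _ => X j) =
          restrict (olabels (B j i)) (X j) := by
        apply restrict_congr
        intro a ha
        constructor
        · intro haS
          exact (hX j hjJ).2.2.2 i (Finset.mem_inter.2 ⟨ha, hSA_sub i haS⟩)
        · intro haB
          exact H2 i j haB
      show OIso (restrict SA (X j)) _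
      rw [show restrict SA (X j) = restrict (olabels (B j i)) (X j) from hC1]
      exact (hX j hjJ).2.2.1 i
    match hAi : A i with
    | none =>
      have hBnone : ∀ j, B j i = none := by
        intro j
        rcases hDA i with ⟨j₀, hiso, hrest⟩ | ⟨cs, hAi2, _⟩
        · replace hiso : OIso (B j₀ i) (A i) := hiso
          replace hrest : ∀ j', j' ≠ j₀ → B j' i = none := hrest
          by_cases hj : j = j₀
          · subst hj; rw [hAi] at hiso; exact oiso_none_right hiso
          · exact hrest j hj
        · rw [hAi] at hAi2; cases hAi2
      have hWnil : W.reduceOption = [] := by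
        apply reduceOption_eq_nil
        intro x hx
        obtain ⟨j, _, rfl⟩ := List.mem_map.1 hx
        rw [hBnone j]; rfl
      rw [hWnil] at step1
      have hc : connect ([] : List (PTree α)) = none := rfl
      rw [hc] at step1
      have hnone : restrict SA Z = none := oiso_none_right step1
      rw [hnone]
      exact trivial
    | some a =>
      show OIso (restrict SA Z) (restrict Z.labels a)
      rcases hDA i with ⟨j₀, hiso, hrest⟩ | ⟨cs, hAi2, _, idx, hni, hisoI, hinj⟩
      · -- case 1
        replace hiso : OIso (B j₀ i) (A i) := hiso
        replace hrest : ∀ j', j' ≠ j₀ → B j' i = none := hrest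
        rw [hAi] at hiso
        match hB0 : B j₀ i, hiso with
        | none, hiso => exact False.elim hiso
        | some b, hiso =>
          have hisoba : Iso b a := hiso
          by_cases hj₀J : j₀ ∈ J
          · have hred : W.reduceOption = (restrict (X j₀).labels b).toList := by
              rw [hW]
              rw [reduceOption_map_single (Finset.nodup_toList J)
                (Finset.mem_toList.2 hj₀J)
                (fun j _ hne => by rw [hrest j hne]; rfl), hB0]
              rfl
            rw [hred, connect_toList] at step1
            have hRHS : restrict Z.labels a = restrict ((X j₀).labels) a := by
              apply restrict_congr
              intro x hx
              constructor
              · intro hxZ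
                obtain ⟨j, hj, hxj, hxB⟩ := KeyZ x i hxZ
                  (hSA_sub i (by rw [hAi]; exact hx))
                by_cases hjj : j = j₀
                · subst hjj; exact hxj
                · rw [hrest j hjj] at hxB; cases hxB
              · intro hxj
                exact (hZmem x).2 ⟨j₀, hj₀J, hxj⟩
            rw [hRHS]
            exact oiso_trans step1 (oiso_restrict hisoba)
          · have hWnil : W.reduceOption = [] := by
              apply reduceOption_eq_nil
              intro x hx
              obtain ⟨j, hj, rfl⟩ := List.mem_map.1 hx
              have : j ≠ j₀ := fun h => hj₀J (h ▸ Finset.mem_toList.1 hj)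
              rw [hrest j this]; rfl
            rw [hWnil] at step1
            have hL : restrict SA Z = none := oiso_none_right step1
            have hR : restrict Z.labels a = none := by
              apply restrict_eq_none
              intro x hx hxZ
              obtain ⟨j, hj, _, hxB⟩ := KeyZ x i hxZ
                (hSA_sub i (by rw [hAi]; exact hx))
              have : j ≠ j₀ := fun h => hj₀J (h ▸ hj)
              rw [hrest j this] at hxB; cases hxB
            rw [hL, hR]; exact trivial
      · -- case 2
        replace hni : ∀ j, B j i = none ↔ idx j = none := hni
        replace hisoI : ∀ j t m, B j i = some t → idx j = some m → Iso t (cs.get m) := hisoI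
        rw [hAi] at hAi2
        obtain rfl : a = node cs := Option.some.inj hAi2
        have hnodupcs : (node cs).labelList.Nodup := Hsubcs i cs hAi
        set F : Fin cs.length → Option (PTree α) :=
          fun m => restrict Z.labels (cs.get m) with hF
        -- labels of children are inside 𝒯 i
        have hcsT : ∀ m : Fin cs.length, (cs.get m).labels ⊆ (𝒯 i).labels := by
          intro m x hx
          apply hSA_sub i
          rw [hAi]
          exact mem_labels_node.2 ⟨cs.get m, List.get_mem cs m, hx⟩
        -- membership analysis
        have hxZcs : ∀ x (m : Fin cs.length), x ∈ Z.labels → x ∈ (cs.get m).labels →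
            ∃ j ∈ J, x ∈ (X j).labels ∧ idx j = some m := by
          intro x m hxZ hxm
          obtain ⟨j, hj, hxj, hxB⟩ := KeyZ x i hxZ (hcsT m hxm)
          match hB : B j i with
          | none => rw [hB] at hxB; cases hxB
          | some t =>
            have hidx : idx j ≠ none := fun h => by
              rw [← hni] at h; rw [h] at hB; cases hB
            obtain ⟨m', hm'⟩ := Option.ne_none_iff_exists'.1 hidx
            rw [hB] at hxB
            have hxm' : x ∈ (cs.get m').labels :=
              labels_eq_of_iso (hisoI j t m' hB hm') ▸ hxB
            have : m' = m := by
              by_contra hne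
              exact Finset.disjoint_left.1 (disjoint_children hnodupcs hne) hxm' hxm
            exact ⟨j, hj, hxj, this ▸ hm'⟩
        have claim_point : ∀ j ∈ J.toList,
            OIso (orestrict (X j).labels (B j i)) ((idx j).bind F) := by
          intro j hj
          have hjJ := Finset.mem_toList.1 hj
          match hB : B j i with
          | none =>
            rw [(hni j).1 hB]
            exact trivial
          | some t =>
            have hidx : idx j ≠ none := fun h => by
              rw [← hni] at h; rw [h] at hB; cases hB
            obtain ⟨m, hm⟩ := Option.ne_none_iff_exists'.1 hidx
            rw [hm, Option.bind_some]
            show OIso (orestrict (X j).labels (some t)) (restrict Z.labels (cs.get m))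
            have hFm : restrict Z.labels (cs.get m) = restrict ((X j).labels) (cs.get m) := by
              apply restrict_congr
              intro x hx
              constructor
              · intro hxZ
                obtain ⟨j', hj', hxj', hm'⟩ := hxZcs x m hxZ hx
                obtain rfl : j' = j := hinj j' j m hm' hm
                exact hxj'
              · intro hxj
                exact (hZmem x).2 ⟨j, hjJ, hxj⟩
            rw [hFm]
            show OIso (restrict ((X j).labels) t) _
            exact oiso_restrict (hisoI j t m hB hm)
        have hcov : ∀ m ∈ List.finRange cs.length, F m ≠ none →
            ∃ j ∈ J.toList, idx j = some m := by
          intro m _ hFm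
          by_contra hno
          push_neg at hno
          apply hFm
          rw [hF]
          apply restrict_eq_none
          intro x hx hxZ
          obtain ⟨j, hj, _, hm⟩ := hxZcs x m hxZ hx
          exact hno j (Finset.mem_toList.2 hj) hm
        have hperm : ((cs.map (restrict Z.labels)).reduceOption).Perm
            ((J.toList.map fun j => (idx j).bind F).reduceOption) := by
          have hcsF : cs.map (restrict Z.labels) = (List.finRange cs.length).map F := by
            conv_lhs => rw [← List.map_get_finRange cs]
            rw [List.map_map]
            rfl
          rw [hcsF, reduceOption_eq_flatMap, reduceOption_eq_flatMap,
            List.flatMap_map, List.flatMap_map]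
          exact perm_key J.toList (List.finRange cs.length)
            (Finset.nodup_toList J) (List.nodup_finRange _)
            (fun a _ b _ m h1 h2 => hinj a b m h1 h2)
            hcov
            (fun j _ m _ => List.mem_finRange m)
        have step2 : OIso (connect W.reduceOption)
            (connect ((cs.map (restrict Z.labels)).reduceOption)) := by
          refine connect_oiso (forall2_reduceOption ?_) hperm.symm
          rw [hW]
          exact forall2_map_same claim_point
        rw [show restrict Z.labels (node cs) =
          connect ((cs.map (restrict Z.labels)).reduceOption) from restrict_node _ _]
        exact oiso_trans step1 step2
  exact ⟨Z, ⟨nodupZ, hZsub, agree, cond4⟩, sizeZ⟩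

end PTree
end Aux5
/-- If `(ℬ₁,…,ℬ_d)` is a decomposition of a sub-forest `𝒜`
of `𝒯` then `masp(𝒜) ≥ masp(ℬ₁) + … + masp(ℬ_d)`. -/
theorem maximum_agreement_supertree_stmt11
    {α : Type} [DecidableEq α] {k : ℕ} (𝒯 : Fin k → PTree α)
    (hphylo : ∀ i, (𝒯 i).labelList.Nodup)
    (A : Fin k → Option (PTree α))
    (hA : PTree.IsSubForest 𝒯 A)
    {d : ℕ} (B : Fin d → Fin k → Option (PTree α))
    (hdec : PTree.IsDecomposition 𝒯 A d B) :
    ∑ j, PTree.masp 𝒯 (B j) ≤ PTree.masp 𝒯 A := by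
  classical
  have hbdd : ∀ C : Fin k → Option (PTree α), BddAbove
      {m : ℕ | ∃ X : PTree α, PTree.IsEnclosedSupertree 𝒯 C X ∧ m = X.treeSize} := by
    intro C
    refine ⟨(PTree.allLabels 𝒯).card, ?_⟩
    rintro m ⟨X, hX, rfl⟩
    exact Finset.card_le_card hX.2.1
  set J : Finset (Fin d) := Finset.univ.filter (fun j => 0 < PTree.masp 𝒯 (B j)) with hJ
  have hwit : ∀ j : Fin d, ∃ X : PTree α, j ∈ J →
      PTree.IsEnclosedSupertree 𝒯 (B j) X ∧ PTree.masp 𝒯 (B j) = X.treeSize := by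
    intro j
    by_cases hj : j ∈ J
    · have hpos : 0 < PTree.masp 𝒯 (B j) := (Finset.mem_filter.1 hj).2
      have hne : {m : ℕ | ∃ X : PTree α,
          PTree.IsEnclosedSupertree 𝒯 (B j) X ∧ m = X.treeSize}.Nonempty := by
        by_contra h
        rw [Set.not_nonempty_iff_eq_empty] at h
        rw [PTree.masp, h] at hpos
        simp at hpos
      obtain ⟨X, hX, hXs⟩ := Nat.sSup_mem hne (hbdd _)
      exact ⟨X, fun _ => ⟨hX, hXs⟩⟩
    · exact ⟨PTree.node [], fun h => absurd h hj⟩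
  choose X hXw using hwit
  obtain ⟨Z, hZ, hZs⟩ := PTree.combine 𝒯 hphylo A hA B hdec J X (fun j hj => (hXw j hj).1)
  have hsum : ∑ j, PTree.masp 𝒯 (B j) = ∑ j ∈ J, (X j).treeSize := by
    rw [hJ, ← Finset.sum_filter_of_ne
      (fun j _ h0 => Nat.pos_of_ne_zero h0)]
    apply Finset.sum_congr rfl
    intro j hj
    exact (hXw j (hJ ▸ hj)).2
  rw [hsum, ← hZs]
  exact le_csSup (hbdd A) ⟨Z, hZ, rfl⟩
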